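/- Let H be a cloud-forest graph on s vertices, witnessed by a partition of V(H) into independent sets I and J and a forest F' with no edges between V(F') and I and each vertex of J having at most one neighbour in V(F'). Let G be a graph, E a set of edges of G of average degree at least 2s, W the set of endpoints of edges in E, and Z ⊆ V(G) a set of s vertices disjoint from W such that for every u ∈ W, Z has at least s common neighbours inside N_G(u). Suppose additionally Z is disjoint from all these common-neighbourhood sets used. Then H is a subgraph of G. -/

import Mathlib

open SimpleGraph


private lemma sym2_edge_head {α : Type*} (F : SimpleGraph α) {v x w : α} :
    ∀ (q : F.Walk v x), q.IsPath → s(v, w) ∈ q.edges →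
      ∃ (h : F.Adj v w) (q' : F.Walk w x), q = Walk.cons h q' := by
  intro q hq he
  cases q with
  | nil => simp at he
  | @cons _ b _ h' q' =>
    rw [Walk.edges_cons] at he
    rcases List.mem_cons.mp he with he1 | he2
    · have hwb : w = b := by
        rcases Sym2.eq_iff.mp he1 with ⟨-, rfl⟩ | ⟨h1, h2⟩
        · rfl
        · exact absurd h1 h'.ne
      subst hwb
      exact ⟨h', q', rfl⟩
    · exfalso
      have hv : v ∈ q'.support := Walk.fst_mem_support_of_mem_edges q' he2
      exact ((Walk.cons_isPath_iff h' q').mp hq).2 hv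

private lemma exists_leaf {α : Type*} [Fintype α] [DecidableEq α] {F : SimpleGraph α}
    [DecidableRel F.Adj] (hF : F.IsAcyclic) (S : Finset α) (hS : S.Nonempty) :
    ∃ a ∈ S, (S.filter (fun b => F.Adj a b)).card ≤ 1 := by
  classical
  suffices h : ∀ m (u v : α) (p : F.Walk u v), p.IsPath → (∀ x ∈ p.support, x ∈ S) →
      S.card ≤ p.length + m → ∃ a ∈ S, (S.filter (fun b => F.Adj a b)).card ≤ 1 by
    obtain ⟨a, ha⟩ := hS
    exact h S.card a a Walk.nil Walk.IsPath.nil (by simp [ha]) (by simp)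
  intro m
  induction m with
  | zero =>
    intro u v p hp hsupp hcard
    exfalso
    have h1 : p.support.toFinset ⊆ S := fun x hx => hsupp x (List.mem_toFinset.mp hx)
    have h2 : p.support.toFinset.card = p.length + 1 := by
      rw [List.toFinset_card_of_nodup hp.support_nodup, Walk.length_support]
    have h3 := Finset.card_le_card h1
    omega
  | succ m ih =>
    intro u v p hp hsupp hcard
    by_cases hv : (S.filter (fun b => F.Adj v b)).card ≤ 1
    · exact ⟨v, hsupp v p.end_mem_support, hv⟩
    push_neg at hv
    by_cases hext : ∃ w ∈ S, F.Adj v w ∧ w ∉ p.support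
    · obtain ⟨w, hwS, hadj, hwp⟩ := hext
      have hp' : (Walk.cons hadj.symm p.reverse).IsPath := by
        rw [Walk.cons_isPath_iff]
        exact ⟨hp.reverse, by rwa [Walk.support_reverse, List.mem_reverse]⟩
      refine ih u w ((Walk.cons hadj.symm p.reverse).reverse) hp'.reverse ?_ ?_
      · intro x hx
        rw [Walk.support_reverse, List.mem_reverse, Walk.support_cons] at hx
        rcases List.mem_cons.mp hx with rfl | hx'
        · exact hwS
        · rw [Walk.support_reverse, List.mem_reverse] at hx'
          exact hsupp x hx'
      · rw [Walk.length_reverse, Walk.length_cons, Walk.length_reverse]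
        omega
    · push_neg at hext
      obtain ⟨w1, hw1, w2, hw2, hne⟩ := Finset.one_lt_card.mp hv
      have key : ∀ w ∈ S.filter (fun b => F.Adj v b), p.reverse.getVert 1 = w := by
        intro w hw
        rw [Finset.mem_filter] at hw
        obtain ⟨hwS, hadj⟩ := hw
        have hwsupp : w ∈ p.reverse.support := by
          rw [Walk.support_reverse, List.mem_reverse]; exact hext w hwS hadj
        have hrpath : p.reverse.IsPath := hp.reverse
        have hqpath : (p.reverse.takeUntil w hwsupp).IsPath := hrpath.takeUntil hwsupp
        have hcyc := hF (Walk.cons hadj (p.reverse.takeUntil w hwsupp).reverse)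
        rw [Walk.cons_isCycle_iff] at hcyc
        have hedge : s(v, w) ∈ (p.reverse.takeUntil w hwsupp).edges := by
          by_contra hne'
          exact hcyc ⟨hqpath.reverse, by rwa [Walk.edges_reverse, List.mem_reverse]⟩
        obtain ⟨hadj', q', hq'⟩ := sym2_edge_head F _ hqpath hedge
        have hspec := p.reverse.take_spec hwsupp
        rw [hq'] at hspec
        rw [← hspec]
        simp [Walk.getVert_cons_succ, Walk.getVert_zero]
      have e1 := key w1 hw1
      have e2 := key w2 hw2
      exact absurd (e1.symm.trans e2) hne
private lemma mindeg {β : Type*} [DecidableEq β] (E : Finset (Sym2 β)) (s : ℕ) (hs : 1 ≤ s)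
    (hdiag : ∀ e ∈ E, ¬ e.IsDiag) :
    ∀ U : Finset β, (E.filter (· ∈ U.sym2)).Nonempty →
      s * U.card ≤ (E.filter (· ∈ U.sym2)).card →
      ∃ U' ⊆ U, U'.Nonempty ∧ ∀ u ∈ U', s ≤ (U'.filter (fun v => s(u, v) ∈ E)).card := by
  intro U
  induction U using Finset.strongInduction with
  | _ U ih =>
    intro hne hcard
    by_cases hall : ∀ u ∈ U, s ≤ (U.filter (fun v => s(u, v) ∈ E)).card
    · obtain ⟨e, he⟩ := hne
      rw [Finset.mem_filter] at he
      obtain ⟨x, hx⟩ : ∃ x, x ∈ e := ⟨e.out.1, Sym2.out_fst_mem e⟩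
      exact ⟨U, Finset.Subset.refl U, ⟨x, Finset.mem_sym2_iff.mp he.2 x hx⟩, hall⟩
    · push_neg at hall
      obtain ⟨u, hu, hlt⟩ := hall
      set U' := U.erase u with hU'
      set A := E.filter (· ∈ U.sym2) with hA
      set B := E.filter (· ∈ U'.sym2) with hB
      have hBA : B ⊆ A := by
        intro e he
        rw [hB, Finset.mem_filter] at he
        rw [hA, Finset.mem_filter]
        refine ⟨he.1, ?_⟩
        have h2 := he.2
        rw [Finset.mem_sym2_iff] at h2 ⊢
        exact fun a ha => Finset.erase_subset u U (h2 a ha)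
      have hdB : (A \ B).card ≤ (U.filter (fun v => s(u, v) ∈ E)).card := by
        have hmem : ∀ e ∈ A \ B, u ∈ e := by
          intro e he
          rw [Finset.mem_sdiff, hA, hB, Finset.mem_filter, Finset.mem_filter] at he
          obtain ⟨⟨heE, heU⟩, he2⟩ := he
          by_contra hue
          refine he2 ⟨heE, ?_⟩
          rw [Finset.mem_sym2_iff] at heU ⊢
          intro a ha
          exact Finset.mem_erase.mpr ⟨fun h => hue (h ▸ ha), heU a ha⟩
        apply Finset.card_le_card_of_injOn (fun e => if h : u ∈ e then Sym2.Mem.other' h else u)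
        · intro e he
          have h := hmem e he
          simp only [Finset.mem_coe] at he ⊢
          rw [dif_pos h]
          rw [Finset.mem_sdiff, hA, Finset.mem_filter] at he
          rw [Finset.mem_filter]
          constructor
          · rw [Finset.mem_sym2_iff] at *
            exact he.1.2 _ (Sym2.other_mem' h)
          · rw [Sym2.other_spec' h]; exact he.1.1
        · intro e1 he1 e2 he2 heq
          have h1 := hmem e1 he1
          have h2 := hmem e2 he2
          dsimp only at heq
          rw [dif_pos h1, dif_pos h2] at heq
          rw [← Sym2.other_spec' h1, ← Sym2.other_spec' h2, heq]
      have hcardsplit : (A \ B).card + B.card = A.card := Finset.card_sdiff_add_card_eq_card hBA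
      have hUcard : U.card = U'.card + 1 := by
        rw [hU', Finset.card_erase_of_mem hu]
        have : 1 ≤ U.card := Finset.card_pos.mpr ⟨u, hu⟩
        omega
      have hmul : s * U.card = s * U'.card + s := by rw [hUcard, Nat.mul_succ]
      have hBcard : s * U'.card + 1 ≤ B.card := by omega
      have hBne : B.Nonempty := Finset.card_pos.mp (by omega)
      obtain ⟨U'', hsub, hne'', hdeg''⟩ := ih U' (Finset.erase_ssubset hu) (by rw [← hB]; exact hBne) (by rw [← hB]; omega)
      exact ⟨U'', hsub.trans (Finset.erase_subset u U), hne'', hdeg''⟩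
private lemma sdr {γ β : Type*} [DecidableEq γ] [DecidableEq β] (s : ℕ) (C : γ → Finset β)
    (Avoid : Finset β) (b0 : β) :
    ∀ T : Finset γ, (∀ j ∈ T, s ≤ (C j).card) → T.card + Avoid.card ≤ s →
      ∃ ψ : γ → β, Set.InjOn ψ ↑T ∧ ∀ j ∈ T, ψ j ∈ C j ∧ ψ j ∉ Avoid := by
  intro T
  induction T using Finset.induction_on with
  | empty => exact fun _ _ => ⟨fun _ => b0, by simp, by simp⟩
  | @insert j T' hj ihT =>
    intro hC hcard
    rw [Finset.card_insert_of_notMem hj] at hcard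
    obtain ⟨ψ, hinj, hmem⟩ := ihT (fun j' hj' => hC j' (Finset.mem_insert_of_mem hj'))
      (by omega)
    have hnotsub : ¬ C j ⊆ Avoid ∪ T'.image ψ := by
      intro hsub
      have h1 := Finset.card_le_card hsub
      have h2 : (Avoid ∪ T'.image ψ).card ≤ Avoid.card + T'.card :=
        le_trans (Finset.card_union_le _ _) (by
          have := Finset.card_image_le (s := T') (f := ψ); omega)
      have h3 := hC j (Finset.mem_insert_self j T')
      omega
    obtain ⟨v, hvC, hvn⟩ := Finset.not_subset.mp hnotsub
    rw [Finset.mem_union, not_or] at hvn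
    refine ⟨Function.update ψ j v, ?_, ?_⟩
    · intro x hx y hy hxy
      rw [Finset.coe_insert, Set.mem_insert_iff, Finset.mem_coe] at hx hy
      rcases hx with rfl | hx <;> rcases hy with rfl | hy
      · rfl
      · exfalso
        rw [Function.update_self, Function.update_of_ne (by rintro rfl; exact hj hy) _ _] at hxy
        exact hvn.2 (hxy ▸ Finset.mem_image_of_mem ψ hy)
      · exfalso
        rw [Function.update_self, Function.update_of_ne (by rintro rfl; exact hj hx) _ _] at hxy
        exact hvn.2 (hxy.symm ▸ Finset.mem_image_of_mem ψ hx)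
      · rw [Function.update_of_ne (by rintro rfl; exact hj hx) _ _,
          Function.update_of_ne (by rintro rfl; exact hj hy) _ _] at hxy
        exact hinj hx hy hxy
    · intro j' hj'
      rcases Finset.mem_insert.mp hj' with rfl | hjT
      · rw [Function.update_self]; exact ⟨hvC, hvn.1⟩
      · rw [Function.update_of_ne (by rintro rfl; exact hj hjT) _ _]
        exact hmem j' hjT
private lemma forest_embed {α β : Type*} [Fintype α] [DecidableEq α] [DecidableEq β]
    {F : SimpleGraph α} [DecidableRel F.Adj] (hF : F.IsAcyclic) (s : ℕ)
    (U : Finset β) (A : β → β → Prop) [DecidableRel A] (hsym : Symmetric A)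
    (hdeg : ∀ u ∈ U, s ≤ (U.filter (fun v => A u v)).card)
    (hUcard : s ≤ U.card) (hUne : U.Nonempty) :
    ∀ S : Finset α, S.card ≤ s →
      ∃ φ : α → β, Set.InjOn φ ↑S ∧ (∀ a ∈ S, φ a ∈ U) ∧
        ∀ a ∈ S, ∀ b ∈ S, F.Adj a b → A (φ a) (φ b) := by
  intro S
  induction S using Finset.strongInduction with
  | _ S ihS =>
    intro hScard
    rcases S.eq_empty_or_nonempty with rfl | hSne
    · exact ⟨fun _ => hUne.choose, by simp, by simp, by simp⟩
    obtain ⟨a, haS, hleaf⟩ := exists_leaf hF S hSne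
    set S' := S.erase a with hS'
    have haS' : a ∉ S' := Finset.notMem_erase a S
    obtain ⟨φ, hinj, hU, hadj⟩ := ihS S' (Finset.erase_ssubset haS)
      (le_trans (Finset.card_le_card (Finset.erase_subset a S)) hScard)
    set P := S'.filter (fun b => F.Adj a b) with hP
    have hPcard : P.card ≤ 1 := by
      refine le_trans (Finset.card_le_card ?_) hleaf
      exact Finset.filter_subset_filter _ (Finset.erase_subset a S)
    obtain ⟨X, hXU, hXcard, hX3⟩ : ∃ X : Finset β, X ⊆ U ∧ s ≤ X.card ∧
        ∀ b ∈ P, ∀ v ∈ X, A (φ b) v := by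
      rcases P.eq_empty_or_nonempty with hPe | ⟨p, hp⟩
      · exact ⟨U, Finset.Subset.refl U, hUcard, by simp [hPe]⟩
      · have hpS' : p ∈ S' := (Finset.mem_filter.mp hp).1
        refine ⟨U.filter (fun v => A (φ p) v), Finset.filter_subset _ _,
          hdeg _ (hU p hpS'), ?_⟩
        intro b hb v hv
        have hbp : b = p := Finset.card_le_one.mp hPcard b hb p hp
        rw [hbp]
        exact (Finset.mem_filter.mp hv).2
    have hnotsub : ¬ X ⊆ S'.image φ := by
      intro hsub
      have h1 := Finset.card_le_card hsub
      have h2 := Finset.card_image_le (s := S') (f := φ)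
      have h3 : S'.card + 1 = S.card := by
        rw [hS', Finset.card_erase_of_mem haS]
        have : 1 ≤ S.card := Finset.card_pos.mpr hSne
        omega
      omega
    obtain ⟨v, hvX, hvim⟩ := Finset.not_subset.mp hnotsub
    have hSins : S = insert a S' := (Finset.insert_erase haS).symm
    refine ⟨Function.update φ a v, ?_, ?_, ?_⟩
    · intro x hx y hy hxy
      rw [Finset.mem_coe, hSins, Finset.mem_insert] at hx hy
      rcases hx with rfl | hx <;> rcases hy with rfl | hy
      · rfl
      · exfalso
        rw [Function.update_self, Function.update_of_ne (by rintro rfl; exact haS' hy) _ _] at hxy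
        exact hvim (hxy ▸ Finset.mem_image_of_mem φ hy)
      · exfalso
        rw [Function.update_self, Function.update_of_ne (by rintro rfl; exact haS' hx) _ _] at hxy
        exact hvim (hxy.symm ▸ Finset.mem_image_of_mem φ hx)
      · rw [Function.update_of_ne (by rintro rfl; exact haS' hx) _ _,
          Function.update_of_ne (by rintro rfl; exact haS' hy) _ _] at hxy
        exact hinj hx hy hxy
    · intro x hx
      rw [hSins, Finset.mem_insert] at hx
      rcases hx with rfl | hx
      · rw [Function.update_self]; exact hXU hvX
      · rw [Function.update_of_ne (by rintro rfl; exact haS' hx) _ _]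
        exact hU x hx
    · intro x hx y hy hxyadj
      rw [hSins, Finset.mem_insert] at hx hy
      rcases hx with rfl | hx <;> rcases hy with rfl | hy
      · exact absurd rfl hxyadj.ne
      · have hyP : y ∈ P := Finset.mem_filter.mpr ⟨hy, hxyadj⟩
        rw [Function.update_self, Function.update_of_ne (by rintro rfl; exact haS' hy) _ _]
        exact hsym (hX3 y hyP v hvX)
      · have hxP : x ∈ P := Finset.mem_filter.mpr ⟨hx, hxyadj.symm⟩
        rw [Function.update_self, Function.update_of_ne (by rintro rfl; exact haS' hx) _ _]
        exact hX3 x hxP v hvX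
      · rw [Function.update_of_ne (by rintro rfl; exact haS' hx) _ _,
          Function.update_of_ne (by rintro rfl; exact haS' hy) _ _]
        exact hadj x hx y hy hxyadj

/-- Embedding a cloud-forest graph `H` on `s` vertices (given by the alternative
partition into independent sets `I`, `J` and a forest `K = V(F')` with no `K`–`I`
edges and each `J`-vertex having at most one neighbour in `K`) into a graph `G`,
given a nonempty edge set `E` of average degree at least `2s`, with endpoint set `W`,
and a set `Z` of `s` vertices disjoint from `W` such that for every `u ∈ W` the set
`Z` has at least `s` common neighbours inside `N_G(u)`, these common-neighbourhood
sets being disjoint from `Z`. Then `H` is a subgraph of `G`. -/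
theorem stmt11 {VH VG : Type*} [Fintype VH] [Fintype VG] [DecidableEq VG]
    (H : SimpleGraph VH) (s : ℕ) (hs : Fintype.card VH = s)
    (I J K : Set VH)
    (hpart : I ∪ J ∪ K = Set.univ)
    (hIJ : Disjoint I J) (hIK : Disjoint I K) (hJK : Disjoint J K)
    (hI : ∀ u ∈ I, ∀ v ∈ I, ¬ H.Adj u v)
    (hJ : ∀ u ∈ J, ∀ v ∈ J, ¬ H.Adj u v)
    (hK : (H.induce K).IsAcyclic)
    (hKI : ∀ u ∈ I, ∀ v ∈ K, ¬ H.Adj u v)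
    (hJ1 : ∀ j ∈ J, {w ∈ K | H.Adj j w}.ncard ≤ 1)
    (G : SimpleGraph VG) [DecidableRel G.Adj]
    (E : Finset (Sym2 VG)) (hE : E.Nonempty) (hEG : E ⊆ G.edgeFinset)
    (W : Finset VG) (hW : ∀ v, v ∈ W ↔ ∃ e ∈ E, v ∈ e)
    (havg : s * W.card ≤ E.card)
    (Z : Finset VG) (hZcard : Z.card = s) (hZW : Disjoint Z W)
    (hcommon : ∀ u ∈ W,
      s ≤ (Finset.univ.filter (fun w => G.Adj u w ∧ ∀ z ∈ Z, G.Adj z w)).card)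
    (hZdisj : ∀ u ∈ W,
      Disjoint Z (Finset.univ.filter (fun w => G.Adj u w ∧ ∀ z ∈ Z, G.Adj z w))) :
    ∃ f : H →g G, Function.Injective f := by
  classical
  rcases Nat.eq_zero_or_pos s with hs0 | hspos
  · have : IsEmpty VH := Fintype.card_eq_zero_iff.mp (by omega)
    exact ⟨⟨fun v => isEmptyElim v, fun {a b} h => isEmptyElim a⟩, fun {a b} h => isEmptyElim a⟩
  have hdiag : ∀ e ∈ E, ¬ e.IsDiag := fun e he =>
    G.not_isDiag_of_mem_edgeSet (SimpleGraph.mem_edgeFinset.mp (hEG he))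
  have hEW : E.filter (· ∈ W.sym2) = E := by
    apply Finset.filter_true_of_mem
    intro e he
    rw [Finset.mem_sym2_iff]
    intro a ha
    exact (hW a).mpr ⟨e, he, ha⟩
  obtain ⟨U, hUW, hUne, hUdeg⟩ := mindeg E s hspos hdiag W
    (by rw [hEW]; exact hE) (by rw [hEW]; exact havg)
  have hUcard : s ≤ U.card := by
    obtain ⟨u, hu⟩ := hUne
    exact le_trans (hUdeg u hu) (Finset.card_le_card (Finset.filter_subset _ _))
  -- embed the forest K
  have hKcard : (Finset.univ : Finset ↥K).card ≤ s := by
    rw [Finset.card_univ, ← hs]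
    exact Fintype.card_le_of_injective (fun a : ↥K => (a : VH)) Subtype.coe_injective
  have hsymE : Symmetric (fun u v : VG => s(u, v) ∈ E) := by
    intro u v h; rwa [Sym2.eq_swap]
  obtain ⟨φ, hφinj0, hφU, hφadj⟩ := forest_embed hK s U (fun u v => s(u, v) ∈ E)
    hsymE hUdeg hUcard hUne Finset.univ hKcard
  have hφinj : Function.Injective φ := fun x y h =>
    hφinj0 (by simp) (by simp) h
  have hφW : ∀ a : ↥K, φ a ∈ W := fun a => hUW (hφU a (Finset.mem_univ a))
  have hφnZ : ∀ a : ↥K, φ a ∉ Z := fun a => Finset.disjoint_right.mp hZW (hφW a)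
  have hWne : W.Nonempty := by
    obtain ⟨e, he⟩ := hE
    exact ⟨e.out.1, (hW _).mpr ⟨e, he, Sym2.out_fst_mem e⟩⟩
  obtain ⟨u₀, hu₀⟩ := hWne
  -- cardinalities
  have hsum : Fintype.card ↥I + Fintype.card ↥J + Fintype.card ↥K = s := by
    have hmem3 : ∀ v : VH, v ∈ I ∨ v ∈ J ∨ v ∈ K := by
      intro v
      have hv : v ∈ I ∪ J ∪ K := by rw [hpart]; trivial
      rcases hv with (h | h) | h
      · exact Or.inl h
      · exact Or.inr (Or.inl h)
      · exact Or.inr (Or.inr h)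
    have h1 : I.toFinset ∪ J.toFinset ∪ K.toFinset = Finset.univ := by
      ext x
      simp only [Finset.mem_union, Set.mem_toFinset, Finset.mem_univ, iff_true]
      rcases hmem3 x with h | h | h
      · exact Or.inl (Or.inl h)
      · exact Or.inl (Or.inr h)
      · exact Or.inr h
    have hd1 : Disjoint I.toFinset J.toFinset := Set.disjoint_toFinset.mpr hIJ
    have hd2 : Disjoint (I.toFinset ∪ J.toFinset) K.toFinset := by
      rw [Finset.disjoint_union_left]
      exact ⟨Set.disjoint_toFinset.mpr hIK, Set.disjoint_toFinset.mpr hJK⟩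
    have h2 := congrArg Finset.card h1
    rw [Finset.card_union_of_disjoint hd2, Finset.card_union_of_disjoint hd1,
      Finset.card_univ, hs] at h2
    simpa [Set.toFinset_card] using h2
  -- embed I into Z
  obtain ⟨z0, hz0⟩ : Z.Nonempty := Finset.card_pos.mp (by omega)
  obtain ⟨ψI, hψIinj0, hψImem⟩ := sdr s (fun _ : ↥I => Z) ∅ z0 Finset.univ
    (fun _ _ => le_of_eq hZcard.symm)
    (by rw [Finset.card_univ, Finset.card_empty]; omega)
  have hψIinj : Function.Injective ψI := fun x y h => hψIinj0 (by simp) (by simp) h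
  have hψIZ : ∀ i : ↥I, ψI i ∈ Z := fun i => (hψImem i (Finset.mem_univ i)).1
  -- targets for J
  obtain ⟨tgt, htgt⟩ : ∃ tgt : ↥J → VG, ∀ j : ↥J, tgt j ∈ W ∧
      ∀ k (hk : k ∈ K), H.Adj ↑j k → tgt j = φ ⟨k, hk⟩ := by
    refine ⟨fun j => if h : ({w ∈ K | H.Adj (↑j : VH) w}).Nonempty then
      φ ⟨h.some, h.some_mem.1⟩ else u₀, fun j => ⟨?_, ?_⟩⟩
    · dsimp only
      split_ifs with h
      · exact hφW _
      · exact hu₀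
    · intro k hk hadj
      have hne : ({w ∈ K | H.Adj (↑j : VH) w}).Nonempty := ⟨k, hk, hadj⟩
      dsimp only
      rw [dif_pos hne]
      have hkk : hne.some = k :=
        (Set.ncard_le_one (Set.toFinite _)).mp (hJ1 ↑j j.2) _ hne.some_mem _ ⟨hk, hadj⟩
      congr 1
      exact Subtype.ext hkk
  -- embed J
  obtain ⟨ψJ, hψJinj0, hψJmem⟩ := sdr s
    (fun j : ↥J => Finset.univ.filter (fun w => G.Adj (tgt j) w ∧ ∀ z ∈ Z, G.Adj z w))
    ((Finset.univ : Finset ↥K).image φ) u₀ Finset.univ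
    (fun j _ => hcommon (tgt j) (htgt j).1)
    (by
      rw [Finset.card_univ]
      have h1 := Finset.card_image_le (s := (Finset.univ : Finset ↥K)) (f := φ)
      rw [Finset.card_univ] at h1
      omega)
  have hψJinj : Function.Injective ψJ := fun x y h => hψJinj0 (by simp) (by simp) h
  have hψJC : ∀ j : ↥J, G.Adj (tgt j) (ψJ j) ∧ ∀ z ∈ Z, G.Adj z (ψJ j) := fun j =>
    (Finset.mem_filter.mp (hψJmem j (Finset.mem_univ j)).1).2
  have hψJnZ : ∀ j : ↥J, ψJ j ∉ Z := fun j =>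
    Finset.disjoint_right.mp (hZdisj (tgt j) (htgt j).1) (hψJmem j (Finset.mem_univ j)).1
  have hψJnotim : ∀ (j : ↥J) (a : ↥K), ψJ j ≠ φ a := by
    intro j a h
    exact (hψJmem j (Finset.mem_univ j)).2 (h ▸ Finset.mem_image_of_mem φ (Finset.mem_univ a))
  -- define f
  have hJmem : ∀ v : VH, v ∉ K → v ∉ I → v ∈ J := by
    intro v h1 h2
    have hv : v ∈ I ∪ J ∪ K := by rw [hpart]; trivial
    rcases hv with (h | h) | h
    · exact absurd h h2
    · exact h
    · exact absurd h h1
  obtain ⟨f, hfK, hfI, hfJ⟩ : ∃ f : VH → VG, (∀ v (h : v ∈ K), f v = φ ⟨v, h⟩) ∧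
      (∀ v (h : v ∈ I), f v = ψI ⟨v, h⟩) ∧ (∀ v (h : v ∈ J), f v = ψJ ⟨v, h⟩) := by
    refine ⟨fun v => if h1 : v ∈ K then φ ⟨v, h1⟩ else if h2 : v ∈ I then ψI ⟨v, h2⟩
      else ψJ ⟨v, hJmem v h1 h2⟩, fun v h => dif_pos h, fun v h => ?_, fun v h => ?_⟩
    · dsimp only
      rw [dif_neg (Set.disjoint_left.mp hIK h), dif_pos h]
    · dsimp only
      rw [dif_neg (Set.disjoint_left.mp hJK h), dif_neg (Set.disjoint_right.mp hIJ h)]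
  have hcases : ∀ v : VH, v ∈ K ∨ v ∈ I ∨ v ∈ J := by
    intro v
    by_cases h1 : v ∈ K
    · exact Or.inl h1
    by_cases h2 : v ∈ I
    · exact Or.inr (Or.inl h2)
    exact Or.inr (Or.inr (hJmem v h1 h2))
  have hEadj : ∀ x y : VG, s(x, y) ∈ E → G.Adj x y := fun x y h =>
    (SimpleGraph.mem_edgeSet G).mp (SimpleGraph.mem_edgeFinset.mp (hEG h))
  have homKJ : ∀ (a b : VH) (ha : a ∈ K) (hb : b ∈ J), H.Adj a b → G.Adj (f a) (f b) := by
    intro a b ha hb hadj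
    rw [hfK a ha, hfJ b hb]
    have h1 := (htgt ⟨b, hb⟩).2 a ha hadj.symm
    have h2 := (hψJC ⟨b, hb⟩).1
    rw [h1] at h2
    exact h2
  have homIJ : ∀ (a b : VH) (ha : a ∈ I) (hb : b ∈ J), H.Adj a b → G.Adj (f a) (f b) := by
    intro a b ha hb _
    rw [hfI a ha, hfJ b hb]
    exact (hψJC ⟨b, hb⟩).2 _ (hψIZ ⟨a, ha⟩)
  have hom : ∀ a b : VH, H.Adj a b → G.Adj (f a) (f b) := by
    intro a b hadj
    rcases hcases a with ha | ha | ha <;> rcases hcases b with hb | hb | hb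
    · rw [hfK a ha, hfK b hb]
      exact hEadj _ _ (hφadj ⟨a, ha⟩ (Finset.mem_univ _) ⟨b, hb⟩ (Finset.mem_univ _) hadj)
    · exact absurd hadj.symm (hKI b hb a ha)
    · exact homKJ a b ha hb hadj
    · exact absurd hadj (hKI a ha b hb)
    · exact absurd hadj (hI a ha b hb)
    · exact homIJ a b ha hb hadj
    · exact (homKJ b a hb ha hadj.symm).symm
    · exact (homIJ b a hb ha hadj.symm).symm
    · exact absurd hadj (hJ a ha b hb)
  have hinj : Function.Injective f := by
    intro x y hxy
    rcases hcases x with hx | hx | hx <;> rcases hcases y with hy | hy | hy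
    · rw [hfK x hx, hfK y hy] at hxy
      exact congrArg Subtype.val (hφinj hxy)
    · rw [hfK x hx, hfI y hy] at hxy
      exact absurd (by rw [hxy]; exact hψIZ ⟨y, hy⟩) (hφnZ ⟨x, hx⟩)
    · rw [hfK x hx, hfJ y hy] at hxy
      exact absurd hxy.symm (hψJnotim ⟨y, hy⟩ ⟨x, hx⟩)
    · rw [hfI x hx, hfK y hy] at hxy
      exact absurd (by rw [← hxy]; exact hψIZ ⟨x, hx⟩) (hφnZ ⟨y, hy⟩)
    · rw [hfI x hx, hfI y hy] at hxy
      exact congrArg Subtype.val (hψIinj hxy)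
    · rw [hfI x hx, hfJ y hy] at hxy
      exact absurd (by rw [← hxy]; exact hψIZ ⟨x, hx⟩) (hψJnZ ⟨y, hy⟩)
    · rw [hfJ x hx, hfK y hy] at hxy
      exact absurd hxy (hψJnotim ⟨x, hx⟩ ⟨y, hy⟩)
    · rw [hfJ x hx, hfI y hy] at hxy
      exact absurd (by rw [hxy]; exact hψIZ ⟨y, hy⟩) (hψJnZ ⟨x, hx⟩)
    · rw [hfJ x hx, hfJ y hy] at hxy
      exact congrArg Subtype.val (hψJinj hxy)
  exact ⟨⟨f, fun {a b} h => hom a b h⟩, hinj⟩
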